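/- Let p = ef+1 be an odd prime with f even, n ≥ 1, and 0 ≤ b < p^{n-1} f. Then the sets C_0^{(2p^n)} and C_1^{(2p^n)} defined from the generalized cyclotomic classes (C_1 being the union of {0} and the sets p^{n-j}(D_{(i+b) mod d_j}^{(2p^j)} ∪ 2D_{(i+b) mod d_j}^{(2p^j)}) for 1 ≤ j ≤ n, 0 ≤ i < d_j/2, and C_0 its complement as defined analogously with d_j/2 ≤ i < d_j together with {p^n}) satisfy |C_0^{(2p^n)}| = |C_1^{(2p^n)}| = p^n. -/
import Mathlib


open Polynomial Finset

noncomputable section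

/-- Generalized cyclotomic class `D_i` of order `d` modulo `m`,
    given by the coset `g^i ⟨g^d⟩` with `e` elements. -/
def Dset (m g d e i : ℕ) : Finset (ZMod m) :=
  (Finset.range e).image (fun t => (g : ZMod m) ^ (i + t * d))

/-- `E_i^{(m)}` evaluated at `α`. -/
def Esum {F : Type*} [Field F] (m g d e i : ℕ) (α : F) : F :=
  ∑ t ∈ Dset m g d e i, α ^ t.val

/-- `H_k^{(p^j)}` evaluated at `α`. -/
def Hsum {F : Type*} [Field F] (p g e f j k : ℕ) (α : F) : F :=
  ∑ i ∈ Finset.range (p ^ (j - 1) * f / 2),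
    Esum (p ^ j) g (p ^ (j - 1) * f) e ((i + k) % (p ^ (j - 1) * f)) α

/-- `T_k^{(p^m)}` evaluated at `α`. -/
def Tsum {F : Type*} [Field F] (p g e f m k : ℕ) (α : F) : F :=
  ∑ j ∈ Finset.Icc 1 m, Hsum p g e f j k (α ^ p ^ (m - j))

/-- The set `C_1^{(2p^n)}`. -/
def Cone (p g e f b n : ℕ) : Finset (ZMod (2 * p ^ n)) :=
  insert 0 <| (Finset.Icc 1 n).biUnion fun j =>
    (Finset.range (p ^ (j - 1) * f / 2)).biUnion fun i =>
      (Dset (2 * p ^ j) g (p ^ (j - 1) * f) e ((i + b) % (p ^ (j - 1) * f))).image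
          (fun x => ((p ^ (n - j) * x.val : ℕ) : ZMod (2 * p ^ n))) ∪
      (Dset (2 * p ^ j) g (p ^ (j - 1) * f) e ((i + b) % (p ^ (j - 1) * f))).image
          (fun x => ((2 * p ^ (n - j) * x.val : ℕ) : ZMod (2 * p ^ n)))

/-- The set `C_0^{(2p^n)}`. -/
def Czero (p g e f b n : ℕ) : Finset (ZMod (2 * p ^ n)) :=
  insert ((p ^ n : ℕ) : ZMod (2 * p ^ n)) <| (Finset.Icc 1 n).biUnion fun j =>
    (Finset.Ico (p ^ (j - 1) * f / 2) (p ^ (j - 1) * f)).biUnion fun i =>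
      (Dset (2 * p ^ j) g (p ^ (j - 1) * f) e ((i + b) % (p ^ (j - 1) * f))).image
          (fun x => ((p ^ (n - j) * x.val : ℕ) : ZMod (2 * p ^ n))) ∪
      (Dset (2 * p ^ j) g (p ^ (j - 1) * f) e ((i + b) % (p ^ (j - 1) * f))).image
          (fun x => ((2 * p ^ (n - j) * x.val : ℕ) : ZMod (2 * p ^ n)))

/-- The set `C̃_1^{(2p^n)}`. -/
def Ctilde1 (p g e f b n : ℕ) : Finset (ZMod (2 * p ^ n)) :=
  insert 0 <| (Finset.Icc 1 n).biUnion fun j =>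
    ((Finset.range (p ^ (j - 1) * f / 2)).biUnion fun i =>
      (Dset (2 * p ^ j) g (p ^ (j - 1) * f) e ((i + b) % (p ^ (j - 1) * f))).image
          (fun x => ((p ^ (n - j) * x.val : ℕ) : ZMod (2 * p ^ n)))) ∪
    ((Finset.Ico (p ^ (j - 1) * f / 2) (p ^ (j - 1) * f)).biUnion fun i =>
      (Dset (2 * p ^ j) g (p ^ (j - 1) * f) e ((i + b) % (p ^ (j - 1) * f))).image
          (fun x => ((2 * p ^ (n - j) * x.val : ℕ) : ZMod (2 * p ^ n))))

/-- Evaluation of the generating polynomial `S` of `s^∞` at `α`. -/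
def Seval {F : Type*} [Field F] (p g e f b n : ℕ) (α : F) : F :=
  ∑ t ∈ Cone p g e f b n, α ^ t.val

/-- Evaluation of the generating polynomial `S̃` of `s̃^∞` at `α`. -/
def Steval {F : Type*} [Field F] (p g e f b n : ℕ) (α : F) : F :=
  ∑ t ∈ Ctilde1 p g e f b n, α ^ t.val

/-- The binary sequence `s^∞` of period `2p^n`. -/
def seqS (p g e f b n : ℕ) : ℕ → ZMod 2 :=
  fun i => if (i : ZMod (2 * p ^ n)) ∈ Cone p g e f b n then 1 else 0

/-- The binary sequence `s̃^∞` of period `2p^n`. -/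
def seqStilde (p g e f b n : ℕ) : ℕ → ZMod 2 :=
  fun i => if (i : ZMod (2 * p ^ n)) ∈ Ctilde1 p g e f b n then 1 else 0

/-- Generating polynomial of one period of a binary sequence. -/
def genPoly (N : ℕ) (s : ℕ → ZMod 2) : Polynomial (ZMod 2) :=
  ∑ k ∈ Finset.range N, Polynomial.C (s k) * Polynomial.X ^ k

/-- Linear complexity: the length of a shortest linear recurrence generating `s`. -/
def linComplexity (s : ℕ → ZMod 2) : ℕ :=
  sInf {L | ∃ c : Fin L → ZMod 2, ∀ n, s (n + L) = ∑ i : Fin L, c i * s (n + i)}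

section Aux
variable {p e f n g : ℕ}

lemma aux_totient (hp : p.Prime) (hodd : Odd p) {j : ℕ} (hj : 1 ≤ j) :
    Nat.totient (2 * p ^ j) = p ^ (j - 1) * (p - 1) := by
  have hcop : Nat.Coprime 2 (p ^ j) :=
    Nat.Coprime.pow_right _ ((Nat.coprime_two_left).mpr hodd)
  rw [Nat.totient_mul hcop, Nat.totient_two, one_mul,
    Nat.totient_prime_pow hp (by omega)]

lemma aux_order (hp : p.Prime) (hodd : Odd p)
    (hg : orderOf (g : ZMod (2 * p ^ n)) = Nat.totient (2 * p ^ n))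
    {j : ℕ} (hj1 : 1 ≤ j) (hjn : j ≤ n) :
    orderOf (g : ZMod (2 * p ^ j)) = Nat.totient (2 * p ^ j) := by
  have hppos := hp.pos
  haveI : NeZero (2 * p ^ n) := ⟨by positivity⟩
  haveI : NeZero (2 * p ^ j) := ⟨by positivity⟩
  have hd : 2 * p ^ j ∣ 2 * p ^ n := mul_dvd_mul_left 2 (pow_dvd_pow p hjn)
  -- g is a unit mod 2p^n
  have hto : 0 < Nat.totient (2 * p ^ n) := Nat.totient_pos.mpr (by positivity)
  have hfin : IsOfFinOrder (g : ZMod (2 * p ^ n)) := by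
    rw [← orderOf_pos_iff, hg]; exact hto
  have hu : IsUnit (g : ZMod (2 * p ^ n)) := hfin.isUnit
  set gu : (ZMod (2 * p ^ n))ˣ := hu.unit with hgu
  have hcoe : (gu : ZMod (2 * p ^ n)) = (g : ZMod (2 * p ^ n)) := hu.unit_spec
  have hordgu : orderOf gu = Nat.card (ZMod (2 * p ^ n))ˣ := by
    rw [← orderOf_units, hcoe, hg, Nat.card_eq_fintype_card,
      ZMod.card_units_eq_totient]
  have htop : Subgroup.zpowers gu = ⊤ := by
    rw [← Subgroup.card_eq_iff_eq_top, Nat.card_zpowers, hordgu]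
  have hsur := ZMod.unitsMap_surjective hd
  have hgen : ∀ v : (ZMod (2 * p ^ j))ˣ, v ∈ Subgroup.zpowers (ZMod.unitsMap hd gu) := by
    intro v
    obtain ⟨u, rfl⟩ := hsur v
    have : u ∈ Subgroup.zpowers gu := htop ▸ Subgroup.mem_top u
    obtain ⟨k, rfl⟩ := this
    exact ⟨k, (map_zpow _ _ _).symm⟩
  have hord2 : orderOf (ZMod.unitsMap hd gu) = Nat.totient (2 * p ^ j) := by
    rw [orderOf_eq_card_of_forall_mem_zpowers hgen, Nat.card_eq_fintype_card,
      ZMod.card_units_eq_totient]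
  have hcoe2 : ((ZMod.unitsMap hd gu : (ZMod (2 * p ^ j))ˣ) : ZMod (2 * p ^ j))
      = (g : ZMod (2 * p ^ j)) := by
    show (ZMod.castHom hd (ZMod (2 * p ^ j)) : ZMod (2*p^n) → ZMod (2*p^j)) (gu : ZMod (2*p^n)) = _
    rw [hcoe]
    simp
  rw [← hcoe2, orderOf_units, hord2]

end Aux

section Aux2
variable {g e d M : ℕ}

lemma aux_unit (he : 0 < e) (hd : 0 < d)
    (horder : orderOf (g : ZMod M) = e * d) : IsUnit (g : ZMod M) := by
  have : IsOfFinOrder (g : ZMod M) := by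
    rw [← orderOf_pos_iff, horder]; positivity
  exact this.isUnit

lemma aux_pow_modEq (he : 0 < e) (hd : 0 < d)
    (horder : orderOf (g : ZMod M) = e * d) {a b : ℕ}
    (hab : (g : ZMod M) ^ a = (g : ZMod M) ^ b) : a ≡ b [MOD e * d] := by
  have hu := aux_unit he hd horder
  have hcoe : (hu.unit : ZMod M) = (g : ZMod M) := hu.unit_spec
  have h2 : hu.unit ^ a = hu.unit ^ b := by
    apply Units.ext
    rw [Units.val_pow_eq_pow_val, Units.val_pow_eq_pow_val, hcoe, hab]
  have := pow_eq_pow_iff_modEq.mp h2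
  rwa [← orderOf_units, hcoe, horder] at this

lemma aux_card_Dset (he : 0 < e) (hd : 0 < d)
    (horder : orderOf (g : ZMod M) = e * d) (k : ℕ) :
    (Dset M g d e k).card = e := by
  rw [Dset, Finset.card_image_of_injOn, Finset.card_range]
  intro t ht s hs hts
  simp only [Finset.coe_range, Set.mem_Iio] at ht hs
  have h := aux_pow_modEq he hd horder hts
  have h2 : k + t * d ≡ k + s * d [MOD e * d] := h
  have h3 : t * d ≡ s * d [MOD e * d] := (Nat.ModEq.add_left_cancel' k h2)
  have h4 : t ≡ s [MOD e] := Nat.ModEq.mul_right_cancel' (by omega) h3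
  have := h4.eq_of_lt_of_lt ht hs
  exact this

lemma aux_disjoint_Dset (he : 0 < e) (hd : 0 < d)
    (horder : orderOf (g : ZMod M) = e * d) {k k' : ℕ}
    (hk : k < d) (hk' : k' < d) (hne : k ≠ k') :
    Disjoint (Dset M g d e k) (Dset M g d e k') := by
  rw [Finset.disjoint_left]
  intro x hx hx'
  simp only [Dset, Finset.mem_image, Finset.mem_range] at hx hx'
  obtain ⟨t, ht, rfl⟩ := hx
  obtain ⟨s, hs, hx'⟩ := hx'
  have h := aux_pow_modEq he hd horder hx'.symm
  have h2 : k + t * d ≡ k' + s * d [MOD d] := h.of_dvd (dvd_mul_left d e)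
  have h3 : k ≡ k' [MOD d] := by
    have ht0 : k + t * d ≡ k [MOD d] := by
      simpa using (Nat.ModEq.add_left k ((Nat.modEq_zero_iff_dvd).mpr (dvd_mul_left d t)))
    have hs0 : k' + s * d ≡ k' [MOD d] := by
      simpa using (Nat.ModEq.add_left k' ((Nat.modEq_zero_iff_dvd).mpr (dvd_mul_left d s)))
    exact (ht0.symm.trans h2).trans hs0
  exact hne (h3.eq_of_lt_of_lt hk hk')

lemma aux_val_coprime [NeZero M] (he : 0 < e) (hd : 0 < d)
    (horder : orderOf (g : ZMod M) = e * d) {k : ℕ} {x : ZMod M}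
    (hx : x ∈ Dset M g d e k) : Nat.Coprime x.val M := by
  simp only [Dset, Finset.mem_image, Finset.mem_range] at hx
  obtain ⟨t, ht, rfl⟩ := hx
  have hu : IsUnit ((g : ZMod M) ^ (k + t * d)) := (aux_unit he hd horder).pow _
  have := ZMod.val_coe_unit_coprime hu.unit
  rwa [hu.unit_spec] at this

end Aux2

section Aux3
variable {p e f n g b : ℕ}

lemma aux_ed (hp : p.Prime) (hodd : Odd p) (hpef : p = e * f + 1)
    {j : ℕ} (hj : 1 ≤ j) :
    e * (p ^ (j - 1) * f) = Nat.totient (2 * p ^ j) := by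
  rw [aux_totient hp hodd hj]
  have h1 : p - 1 = e * f := by omega
  rw [h1]; ring

lemma aux_x_facts (hp : p.Prime) (hodd : Odd p) (hpef : p = e * f + 1)
    (he : 0 < e) (hf : 0 < f)
    (hg : orderOf (g : ZMod (2 * p ^ n)) = Nat.totient (2 * p ^ n))
    {j k : ℕ} (hj1 : 1 ≤ j) (hjn : j ≤ n) {x : ZMod (2 * p ^ j)}
    (hx : x ∈ Dset (2 * p ^ j) g (p ^ (j - 1) * f) e k) :
    ¬ 2 ∣ x.val ∧ ¬ p ∣ x.val ∧ 0 < x.val ∧ x.val < 2 * p ^ j := by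
  have hppos := hp.pos
  haveI : NeZero (2 * p ^ j) := ⟨by positivity⟩
  have hd : 0 < p ^ (j - 1) * f := by positivity
  have horder : orderOf (g : ZMod (2 * p ^ j)) = e * (p ^ (j - 1) * f) := by
    rw [aux_order hp hodd hg hj1 hjn, ← aux_ed hp hodd hpef hj1]
  have co := aux_val_coprime he hd horder hx
  have hlt : x.val < 2 * p ^ j := ZMod.val_lt x
  have hpM : p ∣ 2 * p ^ j := Dvd.dvd.mul_left (dvd_pow_self p (by omega)) 2
  have h2M : 2 ∣ 2 * p ^ j := dvd_mul_right 2 _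
  have hgcd : Nat.gcd x.val (2 * p ^ j) = 1 := co
  refine ⟨?_, ?_, ?_, hlt⟩
  · intro h
    have : (2:ℕ) ∣ 1 := hgcd ▸ Nat.dvd_gcd h h2M
    omega
  · intro h
    have : p ∣ 1 := hgcd ▸ Nat.dvd_gcd h hpM
    exact hp.one_lt.ne' (Nat.dvd_one.mp this)
  · rcases Nat.eq_zero_or_pos x.val with h0 | h0
    · rw [h0, Nat.gcd_zero_left] at hgcd
      have h2 : (1:ℕ) < 2 * p ^ j := by nlinarith [pow_pos hp.pos j]
      omega
    · exact h0

end Aux3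

section Aux4
variable {p e f n g b : ℕ}

lemma aux_b1_val (hp : p.Prime) {j : ℕ} (hjn : j ≤ n) {v : ℕ} (hv : v < 2 * p ^ j) :
    (((p ^ (n - j) * v : ℕ) : ZMod (2 * p ^ n))).val = p ^ (n - j) * v := by
  have hppos := hp.pos
  haveI : NeZero (2 * p ^ n) := ⟨by positivity⟩
  have hpow : p ^ (n - j) * p ^ j = p ^ n := by
    rw [← pow_add]; congr 1; omega
  apply ZMod.val_cast_of_lt
  have h1 : 0 < p ^ (n - j) := by positivity
  nlinarith

lemma aux_b2_val (hp : p.Prime) {j : ℕ} (hjn : j ≤ n) (v : ℕ) :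
    (((2 * p ^ (n - j) * v : ℕ) : ZMod (2 * p ^ n))).val
      = 2 * p ^ (n - j) * (v % p ^ j) := by
  have hppos := hp.pos
  haveI : NeZero (2 * p ^ n) := ⟨by positivity⟩
  have hpow : p ^ (n - j) * p ^ j = p ^ n := by
    rw [← pow_add]; congr 1; omega
  have hsplit : (2 * p ^ (n - j) * v : ℕ)
      = (v / p ^ j) * (2 * p ^ n) + 2 * p ^ (n - j) * (v % p ^ j) := by
    have h := Nat.div_add_mod v (p ^ j)
    calc 2 * p ^ (n - j) * v = 2 * p ^ (n - j) * (p ^ j * (v / p ^ j) + v % p ^ j) := by rw [h]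
      _ = (v / p ^ j) * (2 * (p ^ (n - j) * p ^ j)) + 2 * p ^ (n - j) * (v % p ^ j) := by ring
      _ = _ := by rw [hpow]
  have hlt : 2 * p ^ (n - j) * (v % p ^ j) < 2 * p ^ n := by
    have h1 : v % p ^ j < p ^ j := Nat.mod_lt _ (by positivity)
    have h2 : 0 < p ^ (n - j) := by positivity
    nlinarith
  rw [hsplit, Nat.cast_add, Nat.cast_mul, ZMod.natCast_self, mul_zero, zero_add,
    ZMod.val_cast_of_lt hlt]

end Aux4

section Aux5
variable {p e f n g : ℕ}

-- abbreviations used only propositionally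
lemma aux_shape (hp : p.Prime) (hodd : Odd p) (hpef : p = e * f + 1)
    (he : 0 < e) (hf : 0 < f)
    (hg : orderOf (g : ZMod (2 * p ^ n)) = Nat.totient (2 * p ^ n))
    {j k : ℕ} (hj1 : 1 ≤ j) (hjn : j ≤ n) {y : ZMod (2 * p ^ n)}
    (hy : y ∈ (Dset (2 * p ^ j) g (p ^ (j - 1) * f) e k).image
          (fun x => ((p ^ (n - j) * x.val : ℕ) : ZMod (2 * p ^ n))) ∪
        (Dset (2 * p ^ j) g (p ^ (j - 1) * f) e k).image
          (fun x => ((2 * p ^ (n - j) * x.val : ℕ) : ZMod (2 * p ^ n)))) :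
    ∃ u, 0 < u ∧ ¬ p ∣ u ∧ y.val = p ^ (n - j) * u := by
  rw [Finset.mem_union] at hy
  rcases hy with hy | hy <;> rw [Finset.mem_image] at hy <;>
    obtain ⟨x, hx, rfl⟩ := hy <;>
    obtain ⟨hx2, hxp, hx0, hxlt⟩ := aux_x_facts hp hodd hpef he hf hg hj1 hjn hx
  · exact ⟨x.val, hx0, hxp, aux_b1_val hp hjn hxlt⟩
  · refine ⟨2 * (x.val % p ^ j), ?_, ?_, ?_⟩
    · have : ¬ p ^ j ∣ x.val := fun h => hxp (dvd_trans (dvd_pow_self p (by omega)) h)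
      have : x.val % p ^ j ≠ 0 := fun h => this (Nat.dvd_of_mod_eq_zero h)
      omega
    · intro h
      rcases (Nat.Prime.dvd_mul hp).mp h with h | h
      · have h2 := (Nat.prime_dvd_prime_iff_eq hp Nat.prime_two).mp h
        rw [h2] at hodd
        exact (Nat.not_odd_iff_even.mpr even_two) hodd
      · exact hxp ((Nat.dvd_mod_iff (dvd_pow_self p (by omega))).mp h)
    · rw [aux_b2_val hp hjn]; ring

end Aux5

section Aux6
variable {p e f n g : ℕ}

lemma aux_eq1 (hp : p.Prime) (hodd : Odd p) (hpef : p = e * f + 1)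
    (he : 0 < e) (hf : 0 < f)
    (hg : orderOf (g : ZMod (2 * p ^ n)) = Nat.totient (2 * p ^ n))
    {j k k' : ℕ} (hj1 : 1 ≤ j) (hjn : j ≤ n) {x x' : ZMod (2 * p ^ j)}
    (hx : x ∈ Dset (2 * p ^ j) g (p ^ (j - 1) * f) e k)
    (hx' : x' ∈ Dset (2 * p ^ j) g (p ^ (j - 1) * f) e k')
    (h : ((p ^ (n - j) * x.val : ℕ) : ZMod (2 * p ^ n))
        = ((p ^ (n - j) * x'.val : ℕ) : ZMod (2 * p ^ n))) : x = x' := by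
  have hppos := hp.pos
  haveI : NeZero (2 * p ^ j) := ⟨by positivity⟩
  obtain ⟨-, -, -, hlt⟩ := aux_x_facts hp hodd hpef he hf hg hj1 hjn hx
  obtain ⟨-, -, -, hlt'⟩ := aux_x_facts hp hodd hpef he hf hg hj1 hjn hx'
  have hv := congrArg ZMod.val h
  rw [aux_b1_val hp hjn hlt, aux_b1_val hp hjn hlt'] at hv
  have : x.val = x'.val := Nat.eq_of_mul_eq_mul_left (by positivity) hv
  exact ZMod.val_injective _ this

lemma aux_eq2 (hp : p.Prime) (hodd : Odd p) (hpef : p = e * f + 1)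
    (he : 0 < e) (hf : 0 < f)
    (hg : orderOf (g : ZMod (2 * p ^ n)) = Nat.totient (2 * p ^ n))
    {j k k' : ℕ} (hj1 : 1 ≤ j) (hjn : j ≤ n) {x x' : ZMod (2 * p ^ j)}
    (hx : x ∈ Dset (2 * p ^ j) g (p ^ (j - 1) * f) e k)
    (hx' : x' ∈ Dset (2 * p ^ j) g (p ^ (j - 1) * f) e k')
    (h : ((2 * p ^ (n - j) * x.val : ℕ) : ZMod (2 * p ^ n))
        = ((2 * p ^ (n - j) * x'.val : ℕ) : ZMod (2 * p ^ n))) : x = x' := by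
  have hppos := hp.pos
  haveI : NeZero (2 * p ^ j) := ⟨by positivity⟩
  obtain ⟨hx2, -, -, hlt⟩ := aux_x_facts hp hodd hpef he hf hg hj1 hjn hx
  obtain ⟨hx2', -, -, hlt'⟩ := aux_x_facts hp hodd hpef he hf hg hj1 hjn hx'
  have hv := congrArg ZMod.val h
  rw [aux_b2_val hp hjn, aux_b2_val hp hjn] at hv
  have hmod : x.val % p ^ j = x'.val % p ^ j :=
    Nat.eq_of_mul_eq_mul_left (by positivity) hv
  have h1 : x.val ≡ x'.val [MOD p ^ j] := hmod
  have h2 : x.val ≡ x'.val [MOD 2] := by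
    unfold Nat.ModEq; omega
  have hcop : Nat.Coprime 2 (p ^ j) :=
    Nat.Coprime.pow_right _ ((Nat.coprime_two_left).mpr hodd)
  have h3 : x.val ≡ x'.val [MOD 2 * p ^ j] :=
    (Nat.modEq_and_modEq_iff_modEq_mul hcop).mp ⟨h2, h1⟩
  have : x.val = x'.val := by
    unfold Nat.ModEq at h3
    rw [Nat.mod_eq_of_lt hlt, Nat.mod_eq_of_lt hlt'] at h3
    exact h3
  exact ZMod.val_injective _ this

end Aux6

section Aux7
variable {p e f n g : ℕ}

lemma aux_parity1 (hp : p.Prime) (hodd : Odd p) (hpef : p = e * f + 1)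
    (he : 0 < e) (hf : 0 < f)
    (hg : orderOf (g : ZMod (2 * p ^ n)) = Nat.totient (2 * p ^ n))
    {j k : ℕ} (hj1 : 1 ≤ j) (hjn : j ≤ n) {y : ZMod (2 * p ^ n)}
    (hy : y ∈ (Dset (2 * p ^ j) g (p ^ (j - 1) * f) e k).image
          (fun x => ((p ^ (n - j) * x.val : ℕ) : ZMod (2 * p ^ n)))) :
    ¬ 2 ∣ y.val := by
  rw [Finset.mem_image] at hy
  obtain ⟨x, hx, rfl⟩ := hy
  obtain ⟨hx2, -, -, hlt⟩ := aux_x_facts hp hodd hpef he hf hg hj1 hjn hx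
  rw [aux_b1_val hp hjn hlt]
  intro h
  rcases (Nat.Prime.dvd_mul Nat.prime_two).mp h with h | h
  · have := Nat.Prime.dvd_of_dvd_pow Nat.prime_two h
    have h2 := (Nat.prime_dvd_prime_iff_eq Nat.prime_two hp).mp this
    rw [← h2] at hodd
    exact (Nat.not_odd_iff_even.mpr even_two) hodd
  · exact hx2 h

lemma aux_parity2 (hp : p.Prime) {j k : ℕ} (hjn : j ≤ n) {y : ZMod (2 * p ^ n)}
    (hy : y ∈ (Dset (2 * p ^ j) g (p ^ (j - 1) * f) e k).image
          (fun x => ((2 * p ^ (n - j) * x.val : ℕ) : ZMod (2 * p ^ n)))) :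
    2 ∣ y.val := by
  rw [Finset.mem_image] at hy
  obtain ⟨x, hx, rfl⟩ := hy
  rw [aux_b2_val hp hjn]
  exact ⟨p ^ (n - j) * (x.val % p ^ j), by ring⟩

lemma aux_k_eq (hp : p.Prime) (hodd : Odd p) (hpef : p = e * f + 1)
    (he : 0 < e) (hf : 0 < f)
    (hg : orderOf (g : ZMod (2 * p ^ n)) = Nat.totient (2 * p ^ n))
    {j k k' : ℕ} (hj1 : 1 ≤ j) (hjn : j ≤ n)
    (hk : k < p ^ (j - 1) * f) (hk' : k' < p ^ (j - 1) * f) {y : ZMod (2 * p ^ n)}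
    (hy : y ∈ (Dset (2 * p ^ j) g (p ^ (j - 1) * f) e k).image
          (fun x => ((p ^ (n - j) * x.val : ℕ) : ZMod (2 * p ^ n))) ∪
        (Dset (2 * p ^ j) g (p ^ (j - 1) * f) e k).image
          (fun x => ((2 * p ^ (n - j) * x.val : ℕ) : ZMod (2 * p ^ n))))
    (hy' : y ∈ (Dset (2 * p ^ j) g (p ^ (j - 1) * f) e k').image
          (fun x => ((p ^ (n - j) * x.val : ℕ) : ZMod (2 * p ^ n))) ∪
        (Dset (2 * p ^ j) g (p ^ (j - 1) * f) e k').image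
          (fun x => ((2 * p ^ (n - j) * x.val : ℕ) : ZMod (2 * p ^ n)))) :
    k = k' := by
  have hppos := hp.pos
  have hdpos : 0 < p ^ (j - 1) * f := by positivity
  have horder : orderOf (g : ZMod (2 * p ^ j)) = e * (p ^ (j - 1) * f) := by
    rw [aux_order hp hodd hg hj1 hjn, ← aux_ed hp hodd hpef hj1]
  by_contra hne
  have hdisj := aux_disjoint_Dset he hdpos horder hk hk' hne
  rw [Finset.mem_union] at hy hy'
  rcases hy with hy | hy <;> rcases hy' with hy' | hy'
  · rw [Finset.mem_image] at hy hy'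
    obtain ⟨x, hx, rfl⟩ := hy
    obtain ⟨x', hx', hval⟩ := hy'
    have := aux_eq1 hp hodd hpef he hf hg hj1 hjn hx' hx hval
    exact Finset.disjoint_left.mp hdisj (this ▸ hx) hx'
  · exact absurd (aux_parity2 hp hjn hy')
      (aux_parity1 hp hodd hpef he hf hg hj1 hjn hy)
  · exact absurd (aux_parity2 hp hjn hy)
      (aux_parity1 hp hodd hpef he hf hg hj1 hjn hy')
  · rw [Finset.mem_image] at hy hy'
    obtain ⟨x, hx, rfl⟩ := hy
    obtain ⟨x', hx', hval⟩ := hy'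
    have := aux_eq2 hp hodd hpef he hf hg hj1 hjn hx' hx hval
    exact Finset.disjoint_left.mp hdisj (this ▸ hx) hx'

lemma aux_card_union (hp : p.Prime) (hodd : Odd p) (hpef : p = e * f + 1)
    (he : 0 < e) (hf : 0 < f)
    (hg : orderOf (g : ZMod (2 * p ^ n)) = Nat.totient (2 * p ^ n))
    {j : ℕ} (k : ℕ) (hj1 : 1 ≤ j) (hjn : j ≤ n) :
    ((Dset (2 * p ^ j) g (p ^ (j - 1) * f) e k).image
          (fun x => ((p ^ (n - j) * x.val : ℕ) : ZMod (2 * p ^ n))) ∪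
        (Dset (2 * p ^ j) g (p ^ (j - 1) * f) e k).image
          (fun x => ((2 * p ^ (n - j) * x.val : ℕ) : ZMod (2 * p ^ n)))).card = 2 * e := by
  have hppos := hp.pos
  have hdpos : 0 < p ^ (j - 1) * f := by positivity
  have horder : orderOf (g : ZMod (2 * p ^ j)) = e * (p ^ (j - 1) * f) := by
    rw [aux_order hp hodd hg hj1 hjn, ← aux_ed hp hodd hpef hj1]
  rw [Finset.card_union_of_disjoint, Finset.card_image_of_injOn,
    Finset.card_image_of_injOn, aux_card_Dset he hdpos horder]
  · ring
  · exact fun x hx x' hx' h => aux_eq2 hp hodd hpef he hf hg hj1 hjn hx hx' h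
  · exact fun x hx x' hx' h => aux_eq1 hp hodd hpef he hf hg hj1 hjn hx hx' h
  · rw [Finset.disjoint_left]
    intro y hy hy'
    exact aux_parity1 hp hodd hpef he hf hg hj1 hjn hy (aux_parity2 hp hjn hy')

end Aux7

section Aux8
variable {p e f n g : ℕ}

lemma aux_geom (p : ℕ) : ∀ n : ℕ, ∑ j ∈ Finset.Icc 1 n, p ^ (j - 1) * (p - 1) + 1 = p ^ n ∨ p = 0
  | 0 => by simp
  | (n+1) => by
    rcases Nat.eq_zero_or_pos p with h0 | hpos
    · exact Or.inr h0
    rcases aux_geom p n with ih | ih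
    · left
      rw [Finset.sum_Icc_succ_top (by omega : 1 ≤ n + 1)]
      obtain ⟨q, rfl⟩ : ∃ q, p = q + 1 := ⟨p - 1, by omega⟩
      simp only [Nat.add_sub_cancel] at ih ⊢
      calc ∑ j ∈ Finset.Icc 1 n, (q+1)^(j-1)*q + (q+1)^n*q + 1
          = (∑ j ∈ Finset.Icc 1 n, (q+1)^(j-1)*q + 1) + (q+1)^n*q := by ring
        _ = (q+1)^n + (q+1)^n*q := by rw [ih]
        _ = (q+1)^n * (q+1) := by ring
        _ = (q+1)^(n+1) := by rw [pow_succ]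
    · exact Or.inr ih

lemma aux_master (hp : p.Prime) (hodd : Odd p) (hpef : p = e * f + 1)
    (he : 0 < e) (hf : 0 < f) (hfe : Even f) (hn : 1 ≤ n)
    (hg : orderOf (g : ZMod (2 * p ^ n)) = Nat.totient (2 * p ^ n))
    (b : ℕ) (T : ℕ → Finset ℕ)
    (hTsub : ∀ j i, i ∈ T j → i < p ^ (j - 1) * f)
    (hTcard : ∀ j, 1 ≤ j → j ≤ n → (T j).card = p ^ (j - 1) * f / 2)
    (z : ZMod (2 * p ^ n)) (hz : z.val = 0 ∨ z.val = p ^ n) :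
    (insert z ((Finset.Icc 1 n).biUnion fun j =>
      (T j).biUnion fun i =>
        (Dset (2 * p ^ j) g (p ^ (j - 1) * f) e ((i + b) % (p ^ (j - 1) * f))).image
            (fun x => ((p ^ (n - j) * x.val : ℕ) : ZMod (2 * p ^ n))) ∪
        (Dset (2 * p ^ j) g (p ^ (j - 1) * f) e ((i + b) % (p ^ (j - 1) * f))).image
            (fun x => ((2 * p ^ (n - j) * x.val : ℕ) : ZMod (2 * p ^ n))))).card = p ^ n := by
  have hppos := hp.pos
  set F : ℕ → ℕ → Finset (ZMod (2 * p ^ n)) := fun j i =>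
      (Dset (2 * p ^ j) g (p ^ (j - 1) * f) e ((i + b) % (p ^ (j - 1) * f))).image
          (fun x => ((p ^ (n - j) * x.val : ℕ) : ZMod (2 * p ^ n))) ∪
      (Dset (2 * p ^ j) g (p ^ (j - 1) * f) e ((i + b) % (p ^ (j - 1) * f))).image
          (fun x => ((2 * p ^ (n - j) * x.val : ℕ) : ZMod (2 * p ^ n))) with hF
  -- shape of elements
  have hshape : ∀ j, 1 ≤ j → j ≤ n → ∀ i, ∀ y ∈ F j i,
      ∃ u, 0 < u ∧ ¬ p ∣ u ∧ y.val = p ^ (n - j) * u := by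
    intro j hj1 hjn i y hy
    exact aux_shape hp hodd hpef he hf hg hj1 hjn hy
  -- z is not in the big union
  have hzmem : z ∉ (Finset.Icc 1 n).biUnion fun j => (T j).biUnion fun i => F j i := by
    intro hmem
    rw [Finset.mem_biUnion] at hmem
    obtain ⟨j, hj, hmem⟩ := hmem
    rw [Finset.mem_Icc] at hj
    rw [Finset.mem_biUnion] at hmem
    obtain ⟨i, hi, hmem⟩ := hmem
    obtain ⟨u, hu0, hup, huv⟩ := hshape j hj.1 hj.2 i z hmem
    rcases hz with hz | hz
    · rw [hz] at huv
      have := pow_pos hppos (n - j)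
      nlinarith
    · rw [hz] at huv
      have hpow : p ^ (n - j) * p ^ j = p ^ n := by
        rw [← pow_add]; congr 1; omega
      have h2 : p ^ (n - j) * p ^ j = p ^ (n - j) * u := by rw [hpow, huv]
      have : u = p ^ j := (Nat.eq_of_mul_eq_mul_left (pow_pos hppos _) h2).symm
      exact hup (this ▸ dvd_pow_self p (by omega))
  rw [Finset.card_insert_of_notMem hzmem]
  -- disjointness across j
  have hdisjj : ∀ j₁ ∈ Finset.Icc 1 n, ∀ j₂ ∈ Finset.Icc 1 n, j₁ ≠ j₂ →
      Disjoint ((T j₁).biUnion fun i => F j₁ i) ((T j₂).biUnion fun i => F j₂ i) := by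
    have key : ∀ j₁ j₂, 1 ≤ j₁ → j₂ ≤ n → j₁ < j₂ → ∀ y : ZMod (2 * p ^ n),
        (∃ u, 0 < u ∧ ¬ p ∣ u ∧ y.val = p ^ (n - j₁) * u) →
        (∃ u, 0 < u ∧ ¬ p ∣ u ∧ y.val = p ^ (n - j₂) * u) → False := by
      intro j₁ j₂ h1 h2 hlt y ⟨u, hu0, hup, huv⟩ ⟨u', hu0', hup', huv'⟩
      have hsplit : p ^ (n - j₁) = p ^ (n - j₂) * p ^ (j₂ - j₁) := by
        rw [← pow_add]; congr 1; omega
      have : u' = p ^ (j₂ - j₁) * u := by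
        apply Nat.eq_of_mul_eq_mul_left (show 0 < p ^ (n - j₂) by positivity)
        rw [← huv', huv, hsplit]; ring
      exact hup' (this ▸ Dvd.dvd.mul_right (dvd_pow_self p (by omega)) u)
    intro j₁ hj₁ j₂ hj₂ hne
    rw [Finset.mem_Icc] at hj₁ hj₂
    rw [Finset.disjoint_left]
    intro y hy₁ hy₂
    rw [Finset.mem_biUnion] at hy₁ hy₂
    obtain ⟨i₁, hi₁, hy₁⟩ := hy₁
    obtain ⟨i₂, hi₂, hy₂⟩ := hy₂
    rcases Nat.lt_or_ge j₁ j₂ with h | h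
    · exact key j₁ j₂ hj₁.1 hj₂.2 h y
        (hshape j₁ hj₁.1 hj₁.2 i₁ y hy₁) (hshape j₂ hj₂.1 hj₂.2 i₂ y hy₂)
    · exact key j₂ j₁ hj₂.1 hj₁.2 (by omega) y
        (hshape j₂ hj₂.1 hj₂.2 i₂ y hy₂) (hshape j₁ hj₁.1 hj₁.2 i₁ y hy₁)
  rw [Finset.card_biUnion hdisjj]
  -- per-j card
  have hcardj : ∀ j ∈ Finset.Icc 1 n,
      ((T j).biUnion fun i => F j i).card = p ^ (j - 1) * (p - 1) := by
    intro j hj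
    rw [Finset.mem_Icc] at hj
    have hdpos : 0 < p ^ (j - 1) * f := by positivity
    have hdisji : ∀ i₁ ∈ T j, ∀ i₂ ∈ T j, i₁ ≠ i₂ → Disjoint (F j i₁) (F j i₂) := by
      intro i₁ hi₁ i₂ hi₂ hne
      rw [Finset.disjoint_left]
      intro y hy₁ hy₂
      have hkeq := aux_k_eq hp hodd hpef he hf hg hj.1 hj.2
        (Nat.mod_lt _ hdpos) (Nat.mod_lt _ hdpos) hy₁ hy₂
      have : i₁ + b ≡ i₂ + b [MOD p ^ (j - 1) * f] := hkeq
      have h2 : i₁ ≡ i₂ [MOD p ^ (j - 1) * f] := Nat.ModEq.add_right_cancel' b this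
      exact hne (h2.eq_of_lt_of_lt (hTsub j i₁ hi₁) (hTsub j i₂ hi₂))
    rw [Finset.card_biUnion hdisji]
    have : ∀ i ∈ T j, (F j i).card = 2 * e := fun i _ =>
      aux_card_union hp hodd hpef he hf hg _ hj.1 hj.2
    rw [Finset.sum_congr rfl this, Finset.sum_const, hTcard j hj.1 hj.2, smul_eq_mul]
    obtain ⟨f', rfl⟩ := hfe
    have h1 : p ^ (j - 1) * (f' + f') = 2 * (p ^ (j - 1) * f') := by ring
    rw [h1, Nat.mul_div_cancel_left _ (by norm_num : 0 < 2)]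
    have h2 : p - 1 = e * (f' + f') := by omega
    rw [h2]
    ring
  rw [Finset.sum_congr rfl hcardj]
  rcases aux_geom p n with h | h
  · omega
  · omega
end Aux8

/-- The sets `C_0^{(2p^n)}` and `C_1^{(2p^n)}` both have cardinality `p^n`. -/
theorem stmt6 (p e f n g b : ℕ) (hp : p.Prime) (hodd : Odd p) (hpef : p = e * f + 1)
    (he : 0 < e) (hf : 0 < f) (hfe : Even f) (hn : 1 ≤ n) (hgodd : Odd g)
    (hg : orderOf (g : ZMod (2 * p ^ n)) = Nat.totient (2 * p ^ n))
    (hb : b < p ^ (n - 1) * f) :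
    (Czero p g e f b n).card = p ^ n ∧ (Cone p g e f b n).card = p ^ n := by
  have hppos := hp.pos
  haveI : NeZero (2 * p ^ n) := ⟨by positivity⟩
  constructor
  · rw [Czero]
    exact aux_master hp hodd hpef he hf hfe hn hg b
      (fun j => Finset.Ico (p ^ (j - 1) * f / 2) (p ^ (j - 1) * f))
      (fun j i hi => (Finset.mem_Ico.mp hi).2)
      (fun j hj1 hjn => by
        rw [Nat.card_Ico]
        obtain ⟨f', rfl⟩ := hfe
        have h1 : p ^ (j - 1) * (f' + f') = 2 * (p ^ (j - 1) * f') := by ring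
        omega)
      _ (Or.inr (ZMod.val_cast_of_lt (by nlinarith [pow_pos hppos n])))
  · rw [Cone]
    exact aux_master hp hodd hpef he hf hfe hn hg b
      (fun j => Finset.range (p ^ (j - 1) * f / 2))
      (fun j i hi => lt_of_lt_of_le (Finset.mem_range.mp hi) (Nat.div_le_self _ _))
      (fun j hj1 hjn => Finset.card_range _)
      _ (Or.inl ZMod.val_zero)
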